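/- Let n ≥ 8, let k be an integer with 0 ≤ k ≤ n−7, and set m = ⌊(n−k−3)/2⌋. For i ∈ {0,1}, let T_i(k) be the tree obtained from a path with k+3−i vertices by attaching m pendant leaves to each of its two endpoints, and let T(k) be the tree obtained from T_1(k) by attaching m further pendant leaves to one leaf of T_1(k). Then T(k) is a k-isometric-universal tree for {T_0(k), T_1(k)}, and every tree that is k-isometric-universal for {T_0(k), T_1(k)} has at least |V(T_1(k))| + m vertices; in particular T(k) is a minimum k-isometric-universal tree for this pair. -/

import Mathlib

open SimpleGraph

/-- `φ` realizes `G` as a `k`-isometric subgraph of `U`: it is injective, maps edges to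
edges, and preserves every distance whose value in `U` is at most `k` (distances take
the value `⊤` between vertices in different connected components). -/
def IsKIsometricEmbedding (k : ℕ) {V W : Type} (G : SimpleGraph V) (U : SimpleGraph W)
    (φ : V → W) : Prop :=
  Function.Injective φ ∧
  (∀ u v : V, G.Adj u v → U.Adj (φ u) (φ v)) ∧
  ∀ u v : V, U.edist (φ u) (φ v) ≤ (k : ℕ∞) → G.edist u v = U.edist (φ u) (φ v)

/-- `U` is a `k`-isometric-universal graph for the pair `{G₁, G₂}`: both `G₁` and `G₂`
are isomorphic to `k`-isometric subgraphs of `U`. -/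
def IsKIsoUniversalPair (k : ℕ) {V₁ V₂ W : Type} (G₁ : SimpleGraph V₁)
    (G₂ : SimpleGraph V₂) (U : SimpleGraph W) : Prop :=
  (∃ φ : V₁ → W, IsKIsometricEmbedding k G₁ U φ) ∧
  (∃ φ : V₂ → W, IsKIsometricEmbedding k G₂ U φ)

/-- The double broom: a path with `p` vertices (`Sum.inl 0, …, Sum.inl (p-1)`) with `m`
pendant leaves attached to each of its two endpoints (`Sum.inr (Sum.inl _)` at the
endpoint `Sum.inl 0`, and `Sum.inr (Sum.inr _)` at the endpoint `Sum.inl (p-1)`).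
For `i ∈ {0,1}`, the tree `T_i(k)` of the paper is `doubleBroom (k+3-i) m`. -/
def doubleBroom (p m : ℕ) : SimpleGraph (Fin p ⊕ (Fin m ⊕ Fin m)) :=
  SimpleGraph.fromRel fun x y =>
    match x, y with
    | Sum.inl a, Sum.inl b => (b : ℕ) = (a : ℕ) + 1
    | Sum.inl a, Sum.inr (Sum.inl _) => (a : ℕ) = 0
    | Sum.inl a, Sum.inr (Sum.inr _) => (a : ℕ) = p - 1
    | _, _ => False

/-- The tree `T(k)` of the paper: `T₁(k) = doubleBroom (k+2) m` with `m` further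
pendant leaves attached to one of its leaves (namely the pendant leaf
`Sum.inr (Sum.inr 0)`). -/
def broomExt (k m : ℕ) : SimpleGraph ((Fin (k + 2) ⊕ (Fin m ⊕ Fin m)) ⊕ Fin m) :=
  SimpleGraph.fromRel fun x y =>
    match x, y with
    | Sum.inl a, Sum.inl b => (doubleBroom (k + 2) m).Adj a b
    | Sum.inl (Sum.inr (Sum.inr l)), Sum.inr _ => (l : ℕ) = 0
    | _, _ => False


section General
variable {V : Type} {G : SimpleGraph V}

lemma reach_root_of_parent (root : V) (par : V → V) (ρ : V → ℕ)
    (h1 : ∀ u, u ≠ root → G.Adj u (par u) ∧ ρ (par u) < ρ u) :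
    ∀ u, G.Reachable u root := by
  have key : ∀ n u, ρ u ≤ n → G.Reachable u root := by
    intro n
    induction n with
    | zero =>
      intro u hu
      by_cases h : u = root
      · subst h; exact Reachable.refl u
      · exact absurd (h1 u h).2 (by omega)
    | succ n ih =>
      intro u hu
      by_cases h : u = root
      · subst h; exact Reachable.refl u
      · obtain ⟨hadj, hlt⟩ := h1 u h
        exact hadj.reachable.trans (ih (par u) (by omega))
  exact fun u => key (ρ u) u le_rfl

lemma connected_of_parent (root : V) (par : V → V) (ρ : V → ℕ)
    (h1 : ∀ u, u ≠ root → G.Adj u (par u) ∧ ρ (par u) < ρ u) :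
    G.Connected := by
  have h := reach_root_of_parent root par ρ h1
  have : Nonempty V := ⟨root⟩
  exact ⟨fun u v => (h u).trans (h v).symm⟩

lemma acyclic_of_parent (root : V) (par : V → V) (ρ : V → ℕ)
    (h1 : ∀ u, u ≠ root → G.Adj u (par u) ∧ ρ (par u) < ρ u)
    (h2 : ∀ u v, G.Adj u v → (u ≠ root ∧ v = par u) ∨ (v ≠ root ∧ u = par v)) :
    G.IsAcyclic := by
  classical
  have h2' : ∀ u v, G.Adj u v → (v = par u ∧ ρ (par u) < ρ u) ∨ (u = par v ∧ ρ (par v) < ρ v) := by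
    intro u v h
    rcases h2 u v h with ⟨hu, hv⟩ | ⟨hu, hv⟩
    · exact Or.inl ⟨hv, (h1 u hu).2⟩
    · exact Or.inr ⟨hv, (h1 v hu).2⟩
  intro v c hc
  -- pick a vertex of maximal ρ on the cycle
  obtain ⟨x, hx⟩ : ∃ x, x ∈ c.support.argmax ρ := by
    rcases h : c.support.argmax ρ with _ | x
    · exact absurd (List.argmax_eq_none.mp h) c.support_ne_nil
    · exact ⟨x, rfl⟩
  have hxmem : x ∈ c.support := List.argmax_mem hx
  set c' := c.rotate x hxmem with hc'def
  have hc' : c'.IsCycle := hc.rotate hxmem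
  have hmax : ∀ z, z ∈ c'.support.tail → ρ z ≤ ρ x := by
    intro z hz
    have : z ∈ c.support.tail := ((c.support_rotate x hxmem).mem_iff).mp hz
    exact List.le_of_mem_argmax (List.mem_of_mem_tail this) hx
  obtain ⟨y, hxy, q, hq⟩ := Walk.not_nil_iff.mp hc'.not_nil
  have hcyc := (Walk.cons_isCycle_iff q hxy).mp (hq ▸ hc')
  have hlen : 2 ≤ q.length := by
    have := hc'.three_le_length
    rw [hq] at this
    simpa using this
  have hqrnn : ¬q.reverse.Nil := by
    rw [Walk.not_nil_iff_lt_length]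
    simpa using by omega
  obtain ⟨z, hxz, q2, hq2⟩ := Walk.not_nil_iff.mp hqrnn
  have hzy : z ≠ y := by
    rintro rfl
    apply hcyc.2
    have : s(x, z) ∈ q.reverse.edges := by rw [hq2]; simp
    rw [Walk.edges_reverse, List.mem_reverse] at this
    exact this
  have hytail : y ∈ c'.support.tail := by
    rw [hq]
    simpa using q.start_mem_support
  have hztail : z ∈ c'.support.tail := by
    have : z ∈ q.support := by
      have : z ∈ q.reverse.support := by rw [hq2]; simp
      rwa [Walk.support_reverse, List.mem_reverse] at this
    rw [hq]
    simpa using this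
  have hy : y = par x := by
    rcases h2' x y hxy with ⟨h, _⟩ | ⟨h, hlt⟩
    · exact h
    · rw [← h] at hlt
      exact absurd (hmax y hytail) (by omega)
  have hz : z = par x := by
    rcases h2' x z hxz with ⟨h, _⟩ | ⟨h, hlt⟩
    · exact h
    · rw [← h] at hlt
      exact absurd (hmax z hztail) (by omega)
  exact hzy (hz.trans hy.symm)

lemma isTree_of_parent (root : V) (par : V → V) (ρ : V → ℕ)
    (h1 : ∀ u, u ≠ root → G.Adj u (par u) ∧ ρ (par u) < ρ u)
    (h2 : ∀ u v, G.Adj u v → (u ≠ root ∧ v = par u) ∨ (v ≠ root ∧ u = par v)) :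
    G.IsTree :=
  ⟨connected_of_parent root par ρ h1, acyclic_of_parent root par ρ h1 h2⟩

/-- In an acyclic graph, every path between two vertices realizes the (extended) distance. -/
lemma edist_eq_length_of_isPath (hG : G.IsAcyclic) {x y : V} (p : G.Walk x y) (hp : p.IsPath) :
    G.edist x y = p.length := by
  classical
  have hle : G.edist x y ≤ p.length := edist_le p
  have hnt : G.edist x y ≠ ⊤ := fun h => by
    rw [h] at hle
    exact (ENat.coe_ne_top p.length) (top_le_iff.mp hle)
  obtain ⟨q, hq⟩ := exists_walk_of_edist_ne_top hnt
  have hbp : q.bypass.IsPath := Walk.bypass_isPath q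
  have hpq : p = q.bypass := by
    have := hG.path_unique ⟨p, hp⟩ ⟨q.bypass, hbp⟩
    exact congrArg Subtype.val this
  have hlen : p.length ≤ q.length := by rw [hpq]; exact Walk.length_bypass_le q
  refine le_antisymm hle ?_
  rw [← hq]
  exact Nat.cast_le.mpr hlen

/-- An injective, edge-preserving map into an acyclic graph preserves distances
between reachable pairs. -/
lemma map_edist {W : Type} {U : SimpleGraph W} (hU : U.IsAcyclic) (φ : V → W)
    (hinj : Function.Injective φ) (hedge : ∀ a b, G.Adj a b → U.Adj (φ a) (φ b))
    {u v : V} (h : G.Reachable u v) :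
    G.edist u v = U.edist (φ u) (φ v) := by
  classical
  obtain ⟨p, hp⟩ := h.exists_walk_length_eq_edist
  have hbp : p.bypass.IsPath := Walk.bypass_isPath p
  have hbd : G.edist u v = p.bypass.length := by
    refine le_antisymm (edist_le _) ?_
    rw [← hp]
    exact Nat.cast_le.mpr (Walk.length_bypass_le p)
  let f : G →g U := ⟨φ, fun hadj => hedge _ _ hadj⟩
  have hfp : (p.bypass.map f).IsPath := Walk.map_isPath_of_injective hinj hbp
  have hh := edist_eq_length_of_isPath hU (p.bypass.map f) hfp
  rw [hbd]
  rw [show U.edist (φ u) (φ v) = U.edist (f u) (f v) from rfl, hh, Walk.length_map]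
end General

lemma db_adj_path {p m : ℕ} {a b : Fin p} (h : (b : ℕ) = (a : ℕ) + 1) :
    (doubleBroom p m).Adj (Sum.inl a) (Sum.inl b) :=
  ⟨by simp [Fin.ext_iff]; omega, Or.inl h⟩

lemma db_adj_left {p m : ℕ} {a : Fin p} (i : Fin m) (h : (a : ℕ) = 0) :
    (doubleBroom p m).Adj (Sum.inl a) (Sum.inr (Sum.inl i)) :=
  ⟨by simp, Or.inl h⟩

lemma db_adj_right {p m : ℕ} {a : Fin p} (i : Fin m) (h : (a : ℕ) = p - 1) :
    (doubleBroom p m).Adj (Sum.inl a) (Sum.inr (Sum.inr i)) :=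
  ⟨by simp, Or.inl h⟩

lemma db_adj_cases {p m : ℕ} {x y : Fin p ⊕ (Fin m ⊕ Fin m)}
    (h : (doubleBroom p m).Adj x y) :
    (∃ a b : Fin p, (x = Sum.inl a ∧ y = Sum.inl b) ∧ ((b : ℕ) = a + 1 ∨ (a : ℕ) = b + 1)) ∨
    (∃ (a : Fin p) (i : Fin m), (a : ℕ) = 0 ∧
      ((x = Sum.inl a ∧ y = Sum.inr (Sum.inl i)) ∨ (x = Sum.inr (Sum.inl i) ∧ y = Sum.inl a))) ∨
    (∃ (a : Fin p) (i : Fin m), (a : ℕ) = p - 1 ∧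
      ((x = Sum.inl a ∧ y = Sum.inr (Sum.inr i)) ∨ (x = Sum.inr (Sum.inr i) ∧ y = Sum.inl a))) := by
  obtain ⟨hne, h | h⟩ := h
  · rcases x with a | i | i <;> rcases y with b | j | j <;> simp only [] at h
    · exact Or.inl ⟨a, b, ⟨rfl, rfl⟩, Or.inl h⟩
    · exact Or.inr (Or.inl ⟨a, j, h, Or.inl ⟨rfl, rfl⟩⟩)
    · exact Or.inr (Or.inr ⟨a, j, h, Or.inl ⟨rfl, rfl⟩⟩)
  · rcases x with a | i | i <;> rcases y with b | j | j <;> simp only [] at h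
    · exact Or.inl ⟨a, b, ⟨rfl, rfl⟩, Or.inr h⟩
    · exact Or.inr (Or.inl ⟨b, i, h, Or.inr ⟨rfl, rfl⟩⟩)
    · exact Or.inr (Or.inr ⟨b, i, h, Or.inr ⟨rfl, rfl⟩⟩)

def walkUp (p m : ℕ) : (d : ℕ) → (a : ℕ) → (h : a + d < p) →
    (doubleBroom p m).Walk (Sum.inl ⟨a, by omega⟩) (Sum.inl ⟨a + d, h⟩)
  | 0, _, _ => Walk.nil
  | d+1, a, h =>
    Walk.cons (db_adj_path rfl)
      ((walkUp p m d (a+1) (by omega)).copy rfl (congrArg Sum.inl (Fin.ext (by simp; omega))))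

lemma walkUp_length (p m : ℕ) : ∀ (d a : ℕ) (h : a + d < p), (walkUp p m d a h).length = d := by
  intro d
  induction d with
  | zero => intro a h; rfl
  | succ d ih =>
    intro a h
    rw [walkUp]
    simp [ih]

lemma walkUp_support_mem (p m : ℕ) : ∀ (d a : ℕ) (h : a + d < p) (z),
    z ∈ (walkUp p m d a h).support →
    ∃ j : Fin p, z = Sum.inl j ∧ a ≤ (j : ℕ) ∧ (j : ℕ) ≤ a + d := by
  intro d
  induction d with
  | zero =>
    intro a h z hz
    rw [walkUp] at hz
    simp only [Walk.support_nil, List.mem_singleton] at hz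
    refine ⟨⟨a, by omega⟩, ?_, le_rfl, by simp⟩
    rw [hz]
  | succ d ih =>
    intro a h z hz
    rw [walkUp] at hz
    simp only [Walk.support_cons, Walk.support_copy, List.mem_cons] at hz
    rcases hz with rfl | hz
    · exact ⟨⟨a, by omega⟩, rfl, le_rfl, by simp⟩
    · obtain ⟨j, rfl, h1, h2⟩ := ih (a+1) (by omega) z hz
      exact ⟨j, rfl, by omega, by omega⟩

lemma walkUp_mem_support (p m : ℕ) : ∀ (d a : ℕ) (h : a + d < p) (j : Fin p),
    a ≤ (j : ℕ) → (j : ℕ) ≤ a + d → Sum.inl j ∈ (walkUp p m d a h).support := by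
  intro d
  induction d with
  | zero =>
    intro a h j h1 h2
    rw [walkUp]
    simp only [Walk.support_nil, List.mem_singleton]
    exact congrArg Sum.inl (Fin.ext (by simp; omega))
  | succ d ih =>
    intro a h j h1 h2
    rw [walkUp]
    simp only [Walk.support_cons, Walk.support_copy, List.mem_cons]
    rcases Nat.eq_or_lt_of_le h1 with he | hlt
    · exact Or.inl (congrArg Sum.inl (Fin.ext (by simp; omega)))
    · exact Or.inr (ih (a+1) (by omega) j (by omega) (by omega))

lemma walkUp_isPath (p m : ℕ) : ∀ (d a : ℕ) (h : a + d < p), (walkUp p m d a h).IsPath := by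
  intro d
  induction d with
  | zero => intro a h; rw [walkUp]; exact Walk.IsPath.nil
  | succ d ih =>
    intro a h
    rw [walkUp]
    rw [Walk.cons_isPath_iff]
    refine ⟨by simpa using ih (a+1) (by omega), ?_⟩
    intro hmem
    rw [Walk.support_copy] at hmem
    obtain ⟨j, hj, h1, h2⟩ := walkUp_support_mem p m d (a+1) (by omega) _ hmem
    have := congrArg (fun z => match z with | Sum.inl a => (a : ℕ) | _ => 0) hj
    simp at this
    omega

lemma db_connected (p m : ℕ) (hp : 0 < p) : (doubleBroom p m).Connected := by
  apply connected_of_parent (Sum.inl (⟨0, hp⟩ : Fin p))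
    (fun x => match x with
      | Sum.inl j => Sum.inl ⟨(j : ℕ) - 1, by omega⟩
      | Sum.inr (Sum.inl _) => Sum.inl ⟨0, hp⟩
      | Sum.inr (Sum.inr _) => Sum.inl ⟨p - 1, by omega⟩)
    (fun x => match x with
      | Sum.inl j => (j : ℕ)
      | Sum.inr _ => p)
  intro u hu
  rcases u with j | i | i
  · have hj : (j : ℕ) ≠ 0 := by
      intro h
      exact hu (congrArg Sum.inl (Fin.ext (by simpa using h)))
    exact ⟨(db_adj_path (by simp; omega)).symm, by simp; omega⟩
  · exact ⟨(db_adj_left i rfl).symm, by simp; omega⟩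
  · exact ⟨(db_adj_right i rfl).symm, by simp; omega⟩

lemma db_leaf_unique {p m : ℕ} {s : Fin m ⊕ Fin m} {w w' : Fin p ⊕ (Fin m ⊕ Fin m)}
    (h : (doubleBroom p m).Adj (Sum.inr s) w)
    (h' : (doubleBroom p m).Adj (Sum.inr s) w') : w = w' := by
  have key : ∀ {w}, (doubleBroom p m).Adj (Sum.inr s) w →
      ∃ a : Fin p, w = Sum.inl a ∧
        ((∃ i, s = Sum.inl i ∧ (a : ℕ) = 0) ∨ (∃ i, s = Sum.inr i ∧ (a : ℕ) = p - 1)) := by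
    intro w hw
    rcases db_adj_cases hw with ⟨a, b, ⟨hx, _⟩, _⟩ | ⟨a, i, ha, hor⟩ | ⟨a, i, ha, hor⟩
    · exact absurd hx (by simp)
    · rcases hor with ⟨hx, _⟩ | ⟨hx, hy⟩
      · exact absurd hx (by simp)
      · exact ⟨a, hy, Or.inl ⟨i, by injection hx, ha⟩⟩
    · rcases hor with ⟨hx, _⟩ | ⟨hx, hy⟩
      · exact absurd hx (by simp)
      · exact ⟨a, hy, Or.inr ⟨i, by injection hx, ha⟩⟩
  obtain ⟨a, rfl, ha⟩ := key h
  obtain ⟨a', rfl, ha'⟩ := key h'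
  have : (a : ℕ) = (a' : ℕ) := by
    rcases ha with ⟨i, rfl, h1⟩ | ⟨i, rfl, h1⟩ <;>
      rcases ha' with ⟨i', hi', h2⟩ | ⟨i', hi', h2⟩ <;> first | omega | (exact absurd hi' (by simp))
  exact congrArg Sum.inl (Fin.ext (by simpa using this))

lemma be_adj_db {k m : ℕ} {a b : Fin (k+2) ⊕ (Fin m ⊕ Fin m)}
    (h : (doubleBroom (k + 2) m).Adj a b) :
    (broomExt k m).Adj (Sum.inl a) (Sum.inl b) := by
  have hne : (Sum.inl a : (Fin (k + 2) ⊕ (Fin m ⊕ Fin m)) ⊕ Fin m) ≠ Sum.inl b := by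
    simpa using h.ne
  rcases a with c | s | s <;> rcases b with d | t | t <;> exact ⟨hne, Or.inl h⟩

lemma be_adj_new {k m : ℕ} {l : Fin m} (i : Fin m) (h : (l : ℕ) = 0) :
    (broomExt k m).Adj (Sum.inl (Sum.inr (Sum.inr l))) (Sum.inr i) :=
  ⟨by simp, Or.inl h⟩

lemma be_adj_cases {k m : ℕ} {x y : (Fin (k + 2) ⊕ (Fin m ⊕ Fin m)) ⊕ Fin m}
    (h : (broomExt k m).Adj x y) :
    (∃ a b, (x = Sum.inl a ∧ y = Sum.inl b) ∧ (doubleBroom (k + 2) m).Adj a b) ∨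
    (∃ (l : Fin m) (i : Fin m), (l : ℕ) = 0 ∧
      ((x = Sum.inl (Sum.inr (Sum.inr l)) ∧ y = Sum.inr i) ∨
       (x = Sum.inr i ∧ y = Sum.inl (Sum.inr (Sum.inr l))))) := by
  obtain ⟨hne, h | h⟩ := h
  · rcases x with (a | s | l) | i <;> rcases y with (b | t | t') | j <;> simp only [] at h <;>
      first
        | exact Or.inl ⟨_, _, ⟨rfl, rfl⟩, h⟩
        | exact Or.inr ⟨_, _, h, Or.inl ⟨rfl, rfl⟩⟩
  · rcases x with (a | s | l) | i <;> rcases y with (b | t | t') | j <;> simp only [] at h <;>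
      first
        | exact Or.inl ⟨_, _, ⟨rfl, rfl⟩, h.symm⟩
        | exact Or.inr ⟨_, _, h, Or.inr ⟨rfl, rfl⟩⟩

def bePar (k m : ℕ) (hm : 0 < m) :
    (Fin (k + 2) ⊕ (Fin m ⊕ Fin m)) ⊕ Fin m → (Fin (k + 2) ⊕ (Fin m ⊕ Fin m)) ⊕ Fin m
  | Sum.inl (Sum.inl j) => Sum.inl (Sum.inl ⟨(j : ℕ) - 1, by omega⟩)
  | Sum.inl (Sum.inr (Sum.inl _)) => Sum.inl (Sum.inl ⟨0, by omega⟩)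
  | Sum.inl (Sum.inr (Sum.inr _)) => Sum.inl (Sum.inl ⟨k + 1, by omega⟩)
  | Sum.inr _ => Sum.inl (Sum.inr (Sum.inr ⟨0, hm⟩))

def beRho (k m : ℕ) : (Fin (k + 2) ⊕ (Fin m ⊕ Fin m)) ⊕ Fin m → ℕ
  | Sum.inl (Sum.inl j) => (j : ℕ)
  | Sum.inl (Sum.inr (Sum.inl _)) => 1
  | Sum.inl (Sum.inr (Sum.inr _)) => k + 2
  | Sum.inr _ => k + 3

lemma broomExt_isTree (k m : ℕ) (hm : 0 < m) : (broomExt k m).IsTree := by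
  apply isTree_of_parent (Sum.inl (Sum.inl (⟨0, by omega⟩ : Fin (k+2)))) (bePar k m hm)
    (beRho k m)
  · intro u hu
    rcases u with (j | s | s) | i
    · have hj : (j : ℕ) ≠ 0 := by
        intro h
        apply hu
        simp [Fin.ext_iff, h]
      refine ⟨?_, ?_⟩
      · simp only [bePar]
        exact (be_adj_db (db_adj_path (by simp; omega))).symm
      · simp only [bePar, beRho]
        simp
        have : ((0 : Fin (k + 2)) : ℕ) = 0 := rfl
        omega
    · refine ⟨?_, ?_⟩
      · simp only [bePar]
        exact (be_adj_db (db_adj_left s rfl)).symm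
      · simp only [bePar, beRho]
        simp
    · refine ⟨?_, ?_⟩
      · simp only [bePar]
        exact (be_adj_db (db_adj_right s (by simp))).symm
      · simp only [bePar, beRho]
        simp
    · refine ⟨?_, ?_⟩
      · simp only [bePar]
        exact (be_adj_new i rfl).symm
      · simp only [bePar, beRho]
        simp
  · intro u v huv
    rcases be_adj_cases huv with ⟨a, b, ⟨rfl, rfl⟩, hab⟩ | ⟨l, i, hl, ⟨rfl, rfl⟩ | ⟨rfl, rfl⟩⟩
    · rcases db_adj_cases hab with ⟨c, d, ⟨rfl, rfl⟩, hcd | hcd⟩ |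
        ⟨c, s, hc, ⟨rfl, rfl⟩ | ⟨rfl, rfl⟩⟩ | ⟨c, s, hc, ⟨rfl, rfl⟩ | ⟨rfl, rfl⟩⟩
      · refine Or.inr ⟨by simp only [ne_eq, Sum.inl.injEq, Fin.ext_iff]; omega, ?_⟩
        simp only [bePar]
        simp only [Sum.inl.injEq, Sum.inr.injEq, Fin.ext_iff]
        omega
      · refine Or.inl ⟨by simp only [ne_eq, Sum.inl.injEq, Fin.ext_iff]; omega, ?_⟩
        simp only [bePar]
        simp only [Sum.inl.injEq, Sum.inr.injEq, Fin.ext_iff]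
        omega
      · refine Or.inr ⟨by simp, ?_⟩
        simp only [bePar]
        simp only [Sum.inl.injEq, Sum.inr.injEq, Fin.ext_iff]
        omega
      · refine Or.inl ⟨by simp, ?_⟩
        simp only [bePar]
        simp only [Sum.inl.injEq, Sum.inr.injEq, Fin.ext_iff]
        omega
      · refine Or.inr ⟨by simp, ?_⟩
        simp only [bePar]
        simp only [Sum.inl.injEq, Sum.inr.injEq, Fin.ext_iff]
        omega
      · refine Or.inl ⟨by simp, ?_⟩
        simp only [bePar]
        simp only [Sum.inl.injEq, Sum.inr.injEq, Fin.ext_iff]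
        omega
    · refine Or.inr ⟨by simp, ?_⟩
      simp only [bePar]
      simp only [Sum.inl.injEq, Sum.inr.injEq, Fin.ext_iff]
      omega
    · refine Or.inl ⟨by simp, ?_⟩
      simp only [bePar]
      simp only [Sum.inl.injEq, Sum.inr.injEq, Fin.ext_iff]
      omega

def emb0 (k m : ℕ) (hm : 0 < m) :
    Fin (k + 3) ⊕ (Fin m ⊕ Fin m) → (Fin (k + 2) ⊕ (Fin m ⊕ Fin m)) ⊕ Fin m
  | Sum.inl j => if h : (j : ℕ) < k + 2 then Sum.inl (Sum.inl ⟨j, h⟩)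
      else Sum.inl (Sum.inr (Sum.inr ⟨0, hm⟩))
  | Sum.inr (Sum.inl i) => Sum.inl (Sum.inr (Sum.inl i))
  | Sum.inr (Sum.inr i) => Sum.inr i

lemma emb0_inj (k m : ℕ) (hm : 0 < m) : Function.Injective (emb0 k m hm) := by
  intro x y hxy
  rcases x with a | s | s <;> rcases y with b | t | t <;> simp only [emb0] at hxy
  · have ha := a.isLt
    have hb := b.isLt
    split_ifs at hxy with h1 h2 h2 <;> simp_all [Fin.ext_iff] <;> omega
  · split_ifs at hxy <;> simp_all
  · split_ifs at hxy <;> simp_all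
  · split_ifs at hxy <;> simp_all
  · simp_all
  · simp_all
  · split_ifs at hxy <;> simp_all
  · simp_all
  · simp_all [Fin.ext_iff]

lemma emb0_edge (k m : ℕ) (hm : 0 < m) : ∀ a b, (doubleBroom (k + 3) m).Adj a b →
    (broomExt k m).Adj (emb0 k m hm a) (emb0 k m hm b) := by
  have key : ∀ a b : Fin (k + 3), (b : ℕ) = (a : ℕ) + 1 →
      (broomExt k m).Adj (emb0 k m hm (Sum.inl a)) (emb0 k m hm (Sum.inl b)) := by
    intro a b hab
    have hbl := b.isLt
    have ha : (a : ℕ) < k + 2 := by omega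
    by_cases hb : (b : ℕ) < k + 2
    · simp only [emb0, dif_pos ha, dif_pos hb]
      exact be_adj_db (db_adj_path (by simp [hab]))
    · simp only [emb0, dif_pos ha, dif_neg hb]
      exact be_adj_db (db_adj_right _ (by simp; omega))
  intro a b hab
  rcases db_adj_cases hab with ⟨c, d, ⟨rfl, rfl⟩, hcd | hcd⟩ |
    ⟨c, s, hc, ⟨rfl, rfl⟩ | ⟨rfl, rfl⟩⟩ | ⟨c, s, hc, ⟨rfl, rfl⟩ | ⟨rfl, rfl⟩⟩
  · exact key c d hcd
  · exact (key d c hcd).symm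
  · have hcl : (c : ℕ) < k + 2 := by omega
    simp only [emb0, dif_pos hcl]
    exact be_adj_db (db_adj_left s (by simp [hc]))
  · have hcl : (c : ℕ) < k + 2 := by omega
    simp only [emb0, dif_pos hcl]
    exact (be_adj_db (db_adj_left s (by simp [hc]))).symm
  · have hcl : ¬ (c : ℕ) < k + 2 := by omega
    simp only [emb0, dif_neg hcl]
    exact be_adj_new s rfl
  · have hcl : ¬ (c : ℕ) < k + 2 := by omega
    simp only [emb0, dif_neg hcl]
    exact (be_adj_new s rfl).symm

lemma pair_universal (k m : ℕ) (hm : 0 < m) :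
    IsKIsoUniversalPair k (doubleBroom (k + 3) m) (doubleBroom (k + 2) m) (broomExt k m) := by
  have hacyc : (broomExt k m).IsAcyclic := (broomExt_isTree k m hm).IsAcyclic
  constructor
  · refine ⟨emb0 k m hm, emb0_inj k m hm, emb0_edge k m hm, ?_⟩
    intro u v _
    exact map_edist hacyc _ (emb0_inj k m hm) (emb0_edge k m hm)
      ((db_connected (k + 3) m (by omega)).preconnected u v)
  · refine ⟨Sum.inl, Sum.inl_injective, fun a b h => be_adj_db h, ?_⟩
    intro u v _
    exact map_edist hacyc _ Sum.inl_injective (fun a b h => be_adj_db h)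
      ((db_connected (k + 2) m (by omega)).preconnected u v)

lemma support_subset_range {X W' : Type} {S : SimpleGraph X} (hS : S.IsAcyclic)
    {T : SimpleGraph W'} (hT : T.Connected) (φ : W' → X)
    (hinj : Function.Injective φ) (hedge : ∀ a b, T.Adj a b → S.Adj (φ a) (φ b))
    {x y : X} (P : S.Walk x y) (hP : P.IsPath)
    (hx : x ∈ Set.range φ) (hy : y ∈ Set.range φ) :
    ∀ z ∈ P.support, z ∈ Set.range φ := by
  classical
  obtain ⟨u, rfl⟩ := hx
  obtain ⟨v, rfl⟩ := hy
  obtain ⟨q0⟩ := hT.preconnected u v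
  let f : T →g S := ⟨φ, fun hadj => hedge _ _ hadj⟩
  have hq : (q0.bypass.map f).IsPath :=
    Walk.map_isPath_of_injective hinj (Walk.bypass_isPath q0)
  have hPQ : P = q0.bypass.map f :=
    congrArg Subtype.val (hS.path_unique ⟨P, hP⟩ ⟨q0.bypass.map f, hq⟩)
  intro z hz
  rw [hPQ, Walk.support_map] at hz
  obtain ⟨w, _, rfl⟩ := List.mem_map.mp hz
  exact ⟨w, rfl⟩

lemma db_inl_edist_le (p m : ℕ) (i j : Fin p) (hij : (i : ℕ) ≤ (j : ℕ)) :
    (doubleBroom p m).edist (Sum.inl i) (Sum.inl j) ≤ (((j : ℕ) - (i : ℕ) : ℕ) : ℕ∞) := by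
  have hjl := j.isLt
  refine le_trans (edist_le ((walkUp p m ((j : ℕ) - (i : ℕ)) (i : ℕ) (by omega)).copy
      (congrArg Sum.inl (Fin.ext (by simp)))
      (congrArg Sum.inl (Fin.ext (by simp; omega))))) ?_
  rw [Walk.length_copy, walkUp_length]

lemma key_bound (k m : ℕ) (hm : 0 < m) {X : Type} (S : SimpleGraph X) (hS : S.IsTree)
    (φ₀ : Fin (k + 3) ⊕ (Fin m ⊕ Fin m) → X) (h0inj : Function.Injective φ₀)
    (h0edge : ∀ a b, (doubleBroom (k + 3) m).Adj a b → S.Adj (φ₀ a) (φ₀ b))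
    (φ₁ : Fin (k + 2) ⊕ (Fin m ⊕ Fin m) → X) (h1inj : Function.Injective φ₁)
    (h1edge : ∀ a b, (doubleBroom (k + 2) m).Adj a b → S.Adj (φ₁ a) (φ₁ b)) :
    (φ₀ ⁻¹' (Set.range φ₁)).ncard ≤ k + 3 + m := by
  by_contra hlt
  push_neg at hlt
  set C := φ₀ ⁻¹' (Set.range φ₁) with hCdef
  -- C contains a left leaf and a right leaf
  have hrange : ∀ (g : Fin (k + 3) → Fin (k + 3) ⊕ (Fin m ⊕ Fin m)) (g' : Fin m → Fin (k + 3) ⊕ (Fin m ⊕ Fin m)),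
      Function.Injective g → Function.Injective g' →
      (Set.range g ∪ Set.range g').ncard ≤ k + 3 + m := by
    intro g g' hg hg'
    have h1 := Set.ncard_union_le (Set.range g) (Set.range g')
    have h2 : (Set.range g).ncard = k + 3 := by
      rw [← Nat.card_coe_set_eq, Nat.card_range_of_injective hg]
      simp
    have h3 : (Set.range g').ncard = m := by
      rw [← Nat.card_coe_set_eq, Nat.card_range_of_injective hg']
      simp
    omega
  have hL : ∃ i : Fin m, Sum.inr (Sum.inl i) ∈ C := by
    by_contra hno
    push_neg at hno
    have hsub : C ⊆ Set.range Sum.inl ∪ Set.range (Sum.inr ∘ Sum.inr) := by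
      intro z hz
      rcases z with a | s | s
      · exact Or.inl ⟨a, rfl⟩
      · exact absurd hz (hno s)
      · exact Or.inr ⟨s, rfl⟩
    have h := (Set.ncard_le_ncard hsub (Set.toFinite _)).trans
      (hrange _ _ Sum.inl_injective (Sum.inr_injective.comp Sum.inr_injective))
    omega
  have hR : ∃ i : Fin m, Sum.inr (Sum.inr i) ∈ C := by
    by_contra hno
    push_neg at hno
    have hsub : C ⊆ Set.range Sum.inl ∪ Set.range (Sum.inr ∘ Sum.inl) := by
      intro z hz
      rcases z with a | s | s
      · exact Or.inl ⟨a, rfl⟩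
      · exact Or.inr ⟨s, rfl⟩
      · exact absurd hz (hno s)
    have h := (Set.ncard_le_ncard hsub (Set.toFinite _)).trans
      (hrange _ _ Sum.inl_injective (Sum.inr_injective.comp Sum.inl_injective))
    omega
  obtain ⟨iL, hiL⟩ := hL
  obtain ⟨iR, hiR⟩ := hR
  have hacyc : S.IsAcyclic := hS.IsAcyclic
  have hconn1 := db_connected (k + 2) m (by omega)
  let f0 : doubleBroom (k + 3) m →g S := ⟨φ₀, fun hadj => h0edge _ _ hadj⟩
  -- the long walk in T₀ from the left leaf iL to the right leaf iR
  have hadjL : (doubleBroom (k + 3) m).Adj (Sum.inr (Sum.inl iL)) (Sum.inl (⟨0, by omega⟩ : Fin (k + 3))) :=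
    (db_adj_left iL rfl).symm
  have hadjR : (doubleBroom (k + 3) m).Adj (Sum.inl (⟨k + 2, by omega⟩ : Fin (k + 3))) (Sum.inr (Sum.inr iR)) :=
    db_adj_right iR (by simp)
  let W0 : (doubleBroom (k + 3) m).Walk (Sum.inl (⟨0, by omega⟩ : Fin (k + 3)))
      (Sum.inl (⟨k + 2, by omega⟩ : Fin (k + 3))) :=
    (walkUp (k + 3) m (k + 2) 0 (by omega)).copy rfl (congrArg Sum.inl (Fin.ext (by simp)))
  let W := Walk.cons hadjL (W0.concat hadjR)
  have hW0path : W0.IsPath := by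
    rw [Walk.isPath_copy]
    exact walkUp_isPath (k + 3) m (k + 2) 0 (by omega)
  have hW0mem : ∀ j : Fin (k + 3), Sum.inl j ∈ W0.support := by
    intro j
    have hjl := j.isLt
    rw [Walk.support_copy]
    exact
      walkUp_mem_support (k + 3) m (k + 2) 0 (by omega) j (by omega) (by omega)
  have hW0memc : ∀ z ∈ W0.support, ∃ j : Fin (k + 3), z = Sum.inl j := by
    intro z hz
    rw [Walk.support_copy] at hz
    obtain ⟨j, hj, -, -⟩ := walkUp_support_mem (k + 3) m (k + 2) 0 (by omega) z hz
    exact ⟨j, hj⟩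
  have hWsup : W.support = Sum.inr (Sum.inl iL) :: (W0.support ++ [Sum.inr (Sum.inr iR)]) := by
    rw [Walk.support_cons, Walk.support_concat]
  have hWpath : W.IsPath := by
    rw [Walk.isPath_def, hWsup, List.nodup_cons]
    constructor
    · intro h
      rcases List.mem_append.mp h with h | h
      · obtain ⟨j, hj⟩ := hW0memc _ h
        simp at hj
      · simp at h
    · refine List.Nodup.append ((Walk.isPath_def _).mp hW0path) (List.nodup_singleton _) ?_
      intro a ha hb
      obtain ⟨j, rfl⟩ := hW0memc _ ha
      simp at hb
  have hWmap : (W.map f0).IsPath := Walk.map_isPath_of_injective (f := f0) h0inj hWpath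
  have hsupB : ∀ z ∈ (W.map f0).support, z ∈ Set.range φ₁ :=
    support_subset_range hacyc hconn1 φ₁ h1inj h1edge (W.map f0) hWmap hiL hiR
  have hmemB : ∀ j : Fin (k + 3), φ₀ (Sum.inl j) ∈ Set.range φ₁ := by
    intro j
    apply hsupB
    rw [Walk.support_map]
    exact List.mem_map_of_mem
      (by rw [hWsup]; exact List.mem_cons_of_mem _ (List.mem_append_left _ (hW0mem j)))
  have hdistxy : S.edist (φ₀ (Sum.inl (⟨0, by omega⟩ : Fin (k + 3))))
      (φ₀ (Sum.inl (⟨k + 2, by omega⟩ : Fin (k + 3)))) = ((k + 2 : ℕ) : ℕ∞) := by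
    have hp := Walk.map_isPath_of_injective (f := f0) h0inj hW0path
    have h := edist_eq_length_of_isPath hacyc (W0.map f0) hp
    rw [Walk.length_map] at h
    have hlen : W0.length = k + 2 := by
      rw [Walk.length_copy, walkUp_length]
    rw [hlen] at h
    exact h
  obtain ⟨u, hu⟩ := hmemB ⟨0, by omega⟩
  obtain ⟨v, hv⟩ := hmemB ⟨k + 2, by omega⟩
  have hedist : (doubleBroom (k + 2) m).edist u v = ((k + 2 : ℕ) : ℕ∞) := by
    rw [map_edist hacyc φ₁ h1inj h1edge (hconn1.preconnected u v), hu, hv]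
    exact hdistxy
  have leafFalse : ∀ (s : Fin m ⊕ Fin m) (n1 n2 : X), n1 ≠ n2 →
      n1 ∈ Set.range φ₁ → n2 ∈ Set.range φ₁ →
      S.Adj (φ₁ (Sum.inr s)) n1 → S.Adj (φ₁ (Sum.inr s)) n2 → False := by
    intro s n1 n2 hne h1 h2 ha1 ha2
    obtain ⟨w1, rfl⟩ := h1
    obtain ⟨w2, rfl⟩ := h2
    have a1 : (doubleBroom (k + 2) m).Adj (Sum.inr s) w1 := by
      rw [← edist_eq_one_iff_adj,
        map_edist hacyc φ₁ h1inj h1edge (hconn1.preconnected _ _)]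
      exact edist_eq_one_iff_adj.mpr ha1
    have a2 : (doubleBroom (k + 2) m).Adj (Sum.inr s) w2 := by
      rw [← edist_eq_one_iff_adj,
        map_edist hacyc φ₁ h1inj h1edge (hconn1.preconnected _ _)]
      exact edist_eq_one_iff_adj.mpr ha2
    exact hne (congrArg φ₁ (db_leaf_unique a1 a2))
  rcases u with ju | su
  · rcases v with jv | sv
    · have hjl := jv.isLt
      have hjl2 := ju.isLt
      rcases le_total (ju : ℕ) (jv : ℕ) with hij | hij
      · have h := db_inl_edist_le (k + 2) m ju jv hij
        rw [hedist] at h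
        have := Nat.cast_le.mp h
        omega
      · have h := db_inl_edist_le (k + 2) m jv ju hij
        rw [SimpleGraph.edist_comm, hedist] at h
        have := Nat.cast_le.mp h
        omega
    · refine leafFalse sv (φ₀ (Sum.inr (Sum.inr iR))) (φ₀ (Sum.inl (⟨k + 1, by omega⟩ : Fin (k + 3))))
        (h0inj.ne (by simp)) hiR (hmemB _) ?_ ?_
      · rw [hv]
        exact h0edge _ _ hadjR
      · rw [hv]
        exact h0edge _ _ ((db_adj_path rfl).symm)
  · refine leafFalse su (φ₀ (Sum.inr (Sum.inl iL))) (φ₀ (Sum.inl (⟨1, by omega⟩ : Fin (k + 3))))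
      (h0inj.ne (by simp)) hiL (hmemB _) ?_ ?_
    · rw [hu]
      exact h0edge _ _ (db_adj_left iL rfl)
    · rw [hu]
      exact h0edge _ _ (db_adj_path rfl)

/-- With `n ≥ 8`, `0 ≤ k ≤ n - 7` and `m = ⌊(n-k-3)/2⌋`, the tree
`T(k)` is a `k`-isometric-universal tree for `{T₀(k), T₁(k)}`, and every
`k`-isometric-universal tree for this pair has at least `|V(T₁(k))| + m` vertices
(in particular `T(k)` is a minimum `k`-isometric-universal tree for this pair). -/
theorem stmt_12 (n k : ℕ) (hn : 8 ≤ n) (hk : k ≤ n - 7) (m : ℕ)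
    (hm : m = (n - k - 3) / 2) :
    (broomExt k m).IsTree ∧
    IsKIsoUniversalPair k (doubleBroom (k + 3) m) (doubleBroom (k + 2) m)
      (broomExt k m) ∧
    ∀ (X : Type) (_ : Finite X) (S : SimpleGraph X), S.IsTree →
      IsKIsoUniversalPair k (doubleBroom (k + 3) m) (doubleBroom (k + 2) m) S →
      Nat.card (Fin (k + 2) ⊕ (Fin m ⊕ Fin m)) + m ≤ Nat.card X := by
  have hm0 : 0 < m := by omega
  refine ⟨broomExt_isTree k m hm0, pair_universal k m hm0, ?_⟩
  intro X hX S hS hpair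
  haveI : Finite X := hX
  obtain ⟨⟨φ₀, h0inj, h0edge, -⟩, ⟨φ₁, h1inj, h1edge, -⟩⟩ := hpair
  have hkey := key_bound k m hm0 S hS φ₀ h0inj h0edge φ₁ h1inj h1edge
  set A := Set.range φ₀ with hAdef
  set B := Set.range φ₁ with hBdef
  have hAB : (A ∩ B).ncard ≤ k + 3 + m := by
    have himg : φ₀ '' (φ₀ ⁻¹' B) = B ∩ A := by
      rw [Set.image_preimage_eq_inter_range]
    have : (B ∩ A).ncard = (φ₀ ⁻¹' B).ncard := by
      rw [← himg, Set.ncard_image_of_injective _ h0inj]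
    rw [Set.inter_comm, this]
    exact hkey
  have hA : A.ncard = k + 3 + (m + m) := by
    rw [hAdef, ← Nat.card_coe_set_eq, Nat.card_range_of_injective h0inj]
    simp [Nat.card_sum]
  have hB : B.ncard = k + 2 + (m + m) := by
    rw [hBdef, ← Nat.card_coe_set_eq, Nat.card_range_of_injective h1inj]
    simp [Nat.card_sum]
  have hU : (A ∪ B).ncard ≤ Nat.card X := by
    rw [← Set.ncard_univ]
    exact Set.ncard_le_ncard (Set.subset_univ _) (Set.toFinite _)
  have hie := Set.ncard_union_add_ncard_inter A B (Set.toFinite _) (Set.toFinite _)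
  have hcard : Nat.card (Fin (k + 2) ⊕ (Fin m ⊕ Fin m)) = k + 2 + (m + m) := by
    simp [Nat.card_sum]
  omega
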